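/- The communication heights from the metastable states to the stable state are bounded below by Γ*: Γ(𝟐,𝟏) = Γ(𝟑,𝟏) ≥ Γ*. -/

import Mathlib

namespace GenPotts

/-- Spin values: `0` represents spin `1`, `1` represents spin `2`, `2` represents spin `3`. -/
abbrev Spin := Fin 3

/-- Vertices of the two-dimensional discrete torus. -/
abbrev Vtx (K L : ℕ) := ZMod K × ZMod L

/-- Spin configurations. -/
abbrev Config (K L : ℕ) := Vtx K L → Spin

section Defs

variable (K L : ℕ)

/-- The constant configuration with all spins equal to `r`. -/
def const (r : Spin) : Config K L := fun _ => r

variable [NeZero K] [NeZero L]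

/-- The number of (unordered nearest-neighbour) edges of the torus whose endpoint spins are
`i` and `j`.  Each edge is represented exactly once as a pair (vertex, direction), where the
direction `true` points right and `false` points up. -/
def nEdge (σ : Config K L) (i j : Spin) : ℕ :=
  ((Finset.univ : Finset (Vtx K L × Bool)).filter (fun p =>
    (σ p.1 = i ∧ σ (if p.2 then (p.1.1 + 1, p.1.2) else (p.1.1, p.1.2 + 1)) = j) ∨
    (σ p.1 = j ∧ σ (if p.2 then (p.1.1 + 1, p.1.2) else (p.1.1, p.1.2 + 1)) = i))).card

/-- The number of vertices with spin `i`. -/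
def nVtx (σ : Config K L) (i : Spin) : ℕ :=
  ((Finset.univ : Finset (Vtx K L)).filter (fun v => σ v = i)).card

end Defs

/-- The coupling constants of the generalized Potts model. -/
structure Couplings where
  J11 : ℝ
  J22 : ℝ
  J33 : ℝ
  J12 : ℝ
  J13 : ℝ
  J23 : ℝ

namespace Couplings

def γ1 (C : Couplings) : ℝ := C.J11 - C.J22
def γ12 (C : Couplings) : ℝ := C.J12 + C.J22
def γ23 (C : Couplings) : ℝ := C.J23 + C.J22

end Couplings

/-- The Hamiltonian of the generalized three-state Potts model. -/
noncomputable def H (K L : ℕ) [NeZero K] [NeZero L] (C : Couplings) (σ : Config K L) : ℝ :=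
  -(C.J11 * nEdge K L σ 0 0 + C.J22 * nEdge K L σ 1 1 + C.J33 * nEdge K L σ 2 2)
    + C.J12 * nEdge K L σ 0 1 + C.J13 * nEdge K L σ 0 2 + C.J23 * nEdge K L σ 1 2

/-- The auxiliary function `f_h`. -/
noncomputable def fh (h x : ℝ) : ℝ :=
  4 * (x + h / 2) * (⌈(x + h / 2) / h⌉ : ℝ)
    - 2 * h * ((⌈(x + h / 2) / h⌉ : ℝ) ^ 2 - (⌈(x + h / 2) / h⌉ : ℝ) + 1)

/-- The critical length `ℓ*`. -/
noncomputable def lstar (C : Couplings) : ℕ := ⌈(2 * C.γ12 + C.γ1) / (2 * C.γ1)⌉₊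

/-- The critical energy barrier `Γ*`. -/
noncomputable def Γstar (C : Couplings) : ℝ := fh C.γ1 C.γ12

/-- The standing assumptions on the lattice sizes and the coupling constants. -/
structure Admissible (K L : ℕ) (C : Couplings) : Prop where
  hKL : K ≤ L
  hK : 2 * lstar C ^ 2 ≤ K
  pos11 : 0 < C.J11
  pos22 : 0 < C.J22
  pos33 : 0 < C.J33
  pos12 : 0 < C.J12
  pos13 : 0 < C.J13
  pos23 : 0 < C.J23
  h1122 : C.J22 < C.J11
  h2233 : C.J22 = C.J33
  h1213 : C.J12 = C.J13
  hA : ∀ n : ℤ, (2 * C.γ12 + C.γ1) / (2 * C.γ1) ≠ (n : ℝ)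
  hB : fh C.γ1 C.γ12 = 2 * (K + 1) * C.γ23
  hC : 4 * C.γ23 + C.γ1 ≤ 2 * C.γ12

section Paths

variable (K L : ℕ) [NeZero K] [NeZero L]

/-- Two configurations differ at exactly one vertex. -/
def SingleFlip (σ σ' : Config K L) : Prop :=
  ∃ v, σ v ≠ σ' v ∧ ∀ w, w ≠ v → σ w = σ' w

/-- A path: a finite sequence of configurations in which consecutive configurations differ
at exactly one vertex. -/
structure Path where
  len : ℕ
  toFun : ℕ → Config K L
  step : ∀ n, n < len → SingleFlip K L (toFun n) (toFun (n + 1))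

/-- The height of a path: the maximum of `H` along it. -/
noncomputable def Path.height {K L : ℕ} [NeZero K] [NeZero L] (ω : Path K L)
    (C : Couplings) : ℝ :=
  Finset.sup' (Finset.range (ω.len + 1))
    (Finset.nonempty_range_iff.mpr (Nat.succ_ne_zero _))
    (fun n => H K L C (ω.toFun n))

/-- The path goes from `σ` to `σ'`. -/
def Path.FromTo {K L : ℕ} [NeZero K] [NeZero L] (ω : Path K L)
    (σ σ' : Config K L) : Prop :=
  ω.toFun 0 = σ ∧ ω.toFun ω.len = σ'

/-- A path is an `ij`-path if every configuration along it has all spins in `{i, j}`. -/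
def Path.OnlySpins {K L : ℕ} [NeZero K] [NeZero L] (ω : Path K L) (i j : Spin) : Prop :=
  ∀ n ≤ ω.len, ∀ v, ω.toFun n v = i ∨ ω.toFun n v = j

/-- The communication height `Φ(σ, σ')`: the minimal height over paths from `σ` to `σ'`. -/
noncomputable def Phi (C : Couplings) (σ σ' : Config K L) : ℝ :=
  sInf {x | ∃ ω : Path K L, ω.FromTo σ σ' ∧ ω.height C = x}

/-- The communication height `Φ(σ, A)` between `σ` and a set `A`. -/
noncomputable def PhiSet (C : Couplings) (σ : Config K L) (A : Set (Config K L)) : ℝ :=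
  sInf {x | ∃ ω : Path K L, ω.toFun 0 = σ ∧ ω.toFun ω.len ∈ A ∧ ω.height C = x}

/-- The energy barrier `Γ(σ, σ') = Φ(σ, σ') − H(σ)`. -/
noncomputable def Gamma (C : Couplings) (σ σ' : Config K L) : ℝ :=
  Phi K L C σ σ' - H K L C σ

/-- The stability level `V_σ = Φ(σ, I_σ) − H(σ)` where `I_σ = {η : H(η) < H(σ)}`. -/
noncomputable def stabLevel (C : Couplings) (σ : Config K L) : ℝ :=
  PhiSet K L C σ {η | H K L C η < H K L C σ} - H K L C σ

/-- The set `X^s` of global minimizers of `H`. -/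
def Xs (C : Couplings) : Set (Config K L) :=
  {σ | ∀ η, H K L C σ ≤ H K L C η}

/-- The set `X^m` of metastable configurations. -/
noncomputable def Xm (C : Couplings) : Set (Config K L) :=
  {η | η ∉ Xs K L C ∧
    stabLevel K L C η = sSup {x | ∃ σ, σ ∉ Xs K L C ∧ stabLevel K L C σ = x}}

/-- The projection operator `P^{rs}` replacing every spin `r` by `s`. -/
def proj (r s : Spin) (σ : Config K L) : Config K L :=
  fun v => if σ v = r then s else σ v

/-- The initial cycle `C_r = {σ : Φ(𝐫, σ) < H(𝟐) + Γ*}`. -/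
noncomputable def initCycle (C : Couplings) (r : Spin) : Set (Config K L) :=
  {σ | Phi K L C (const K L r) σ < H K L C (const K L 1) + Γstar C}

/-- An optimal path from `σ` to `σ'`: a path whose height equals `Φ(σ, σ')`. -/
noncomputable def OptPath (C : Couplings) (σ σ' : Config K L) (ω : Path K L) : Prop :=
  ω.FromTo σ σ' ∧ ω.height C = Phi K L C σ σ'

/-- The configurations at which `H` attains its maximum along a path. -/
noncomputable def pathArgmax (C : Couplings) (ω : Path K L) : Set (Config K L) :=
  {ξ | (∃ n ≤ ω.len, ω.toFun n = ξ) ∧ H K L C ξ = ω.height C}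

/-- The set of minimal saddles `S(σ, σ')`. -/
noncomputable def Saddles (C : Couplings) (σ σ' : Config K L) : Set (Config K L) :=
  {ξ | ∃ ω : Path K L, OptPath K L C σ σ' ω ∧ ξ ∈ pathArgmax K L C ω}

/-- `W` is a gate for the transition `σ → σ'`. -/
noncomputable def IsGate (C : Couplings) (σ σ' : Config K L) (W : Set (Config K L)) : Prop :=
  W ⊆ Saddles K L C σ σ' ∧
    ∀ ω : Path K L, OptPath K L C σ σ' ω → ∃ n ≤ ω.len, ω.toFun n ∈ W

/-- `W` is a minimal gate for the transition `σ → σ'`. -/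
noncomputable def IsMinimalGate (C : Couplings) (σ σ' : Config K L)
    (W : Set (Config K L)) : Prop :=
  IsGate K L C σ σ' W ∧
    ∀ W', W' ⊂ W → ∃ ω : Path K L, OptPath K L C σ σ' ω ∧ ∀ n ≤ ω.len, ω.toFun n ∉ W'

/-- `G(σ, σ')`: the union of all minimal gates for the transition `σ → σ'`. -/
noncomputable def gateUnion (C : Couplings) (σ σ' : Config K L) : Set (Config K L) :=
  {ξ | ∃ W, IsMinimalGate K L C σ σ' W ∧ ξ ∈ W}

end Paths

section Geometry

variable (K L : ℕ)

/-- The `a × b` rectangle (`a` columns, `b` rows) with lower-left corner `(x0, y0)`. -/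
def rectSet (x0 : ZMod K) (y0 : ZMod L) (a b : ℕ) : Set (Vtx K L) :=
  {v | ∃ i j : ℕ, i < a ∧ j < b ∧ v = (x0 + (i : ZMod K), y0 + (j : ZMod L))}

/-- A vertical bar of `l` consecutive cells in column `x` starting at row `y0`. -/
def barV (x : ZMod K) (y0 : ZMod L) (l : ℕ) : Set (Vtx K L) :=
  {v | ∃ j : ℕ, j < l ∧ v = (x, y0 + (j : ZMod L))}

/-- A horizontal bar of `l` consecutive cells in row `y` starting at column `x0`. -/
def barH (x0 : ZMod K) (y : ZMod L) (l : ℕ) : Set (Vtx K L) :=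
  {v | ∃ i : ℕ, i < l ∧ v = (x0 + (i : ZMod K), y)}

/-- The configuration with spin `s` exactly on the set `A` and spin `r` elsewhere. -/
noncomputable def onSet (A : Set (Vtx K L)) (r s : Spin) : Config K L :=
  fun v => @ite _ (v ∈ A) (Classical.dec _) s r

/-- `R_{a,b}(r,s)`: configurations equal to `r` everywhere except for spins `s` on an
`a × b` rectangle. -/
noncomputable def Rconf (a b : ℕ) (r s : Spin) : Set (Config K L) :=
  {σ | ∃ x0 y0, σ = onSet K L (rectSet K L x0 y0 a b) r s}

/-- `B^l_{a,b}(r,s)`: configurations equal to `r` everywhere except for spins `s` on an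
`a × b` rectangle together with a bar of `l` consecutive cells attached to one of the
(vertical) sides of length `b`. -/
noncomputable def Bconf (a b l : ℕ) (r s : Spin) : Set (Config K L) :=
  {σ | ∃ (x0 : ZMod K) (y0 : ZMod L) (x : ZMod K) (j0 : ℕ),
      (x = x0 - 1 ∨ x = x0 + (a : ZMod K)) ∧ j0 + l ≤ b ∧
      σ = onSet K L (rectSet K L x0 y0 a b ∪ barV K L x (y0 + (j0 : ZMod L)) l) r s}

/-- `B̂^l_{a,b}(r,s)`: as `B^l_{a,b}(r,s)` but with the bar attached to one of the
(horizontal) sides of length `a`. -/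
noncomputable def Bhat (a b l : ℕ) (r s : Spin) : Set (Config K L) :=
  {σ | ∃ (x0 : ZMod K) (y0 : ZMod L) (y : ZMod L) (i0 : ℕ),
      (y = y0 - 1 ∨ y = y0 + (b : ZMod L)) ∧ i0 + l ≤ a ∧
      σ = onSet K L (rectSet K L x0 y0 a b ∪ barH K L (x0 + (i0 : ZMod K)) y l) r s}

/-- The critical set `W(𝐦, 𝟏) = B^1_{ℓ*−1,ℓ*}(m,1) ∪ B̂^1_{ℓ*,ℓ*−1}(m,1)`. -/
noncomputable def Wcrit (C : Couplings) (m : Spin) : Set (Config K L) :=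
  Bconf K L (lstar C - 1) (lstar C) 1 m 0 ∪ Bhat K L (lstar C) (lstar C - 1) 1 m 0

/-- The set `W'(𝐦, 𝟏) = B̂^1_{ℓ*−1,ℓ*}(m,1) ∪ B^1_{ℓ*,ℓ*−1}(m,1)`. -/
noncomputable def Wcrit' (C : Couplings) (m : Spin) : Set (Config K L) :=
  Bhat K L (lstar C - 1) (lstar C) 1 m 0 ∪ Bconf K L (lstar C) (lstar C - 1) 1 m 0

/-- The set `𝒫(𝐫, 𝐬)`. -/
noncomputable def Pgate (r s : Spin) : Set (Config K L) :=
  Bconf K L 1 K (K - 1) r s ∪ (if K = L then Bhat K L K 1 (K - 1) r s else ∅)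

/-- The set `𝒬(𝐫, 𝐬)`. -/
noncomputable def Qgate (r s : Spin) : Set (Config K L) :=
  Rconf K L 2 (K - 1) r s ∪ Bconf K L 1 K (K - 2) r s ∪
    (if K = L then Rconf K L (K - 1) 2 r s ∪ Bhat K L K 1 (K - 2) r s else ∅)

/-- The set `ℋ_i(𝐫, 𝐬)`. -/
noncomputable def Hgate (i : ℕ) (r s : Spin) : Set (Config K L) :=
  Bconf K L 1 K i r s ∪ (⋃ j ∈ Finset.Icc (i + 1) (K - 2), Bconf K L 1 (K - 1) j r s) ∪
    (if K = L then
      Bhat K L K 1 i r s ∪ ⋃ j ∈ Finset.Icc (i + 1) (K - 2), Bhat K L (K - 1) 1 j r s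
    else ∅)

/-- The set `𝒲^h_j(𝐫, 𝐬)`. -/
noncomputable def Wgate (j h : ℕ) (r s : Spin) : Set (Config K L) :=
  Bconf K L j K h r s ∪ (if K = L then Bhat K L K j h r s else ∅)

/-- The admissible gate collection for the transition between `𝟐` and `𝟑`. -/
noncomputable def gateCollection : Set (Set (Config K L)) :=
  {A | (∃ j h, 2 ≤ j ∧ j ≤ L - 3 ∧ 1 ≤ h ∧ h ≤ K - 1 ∧ A = Wgate K L j h 1 2)
    ∨ A = Qgate K L 1 2 ∨ A = Pgate K L 1 2 ∨ A = Pgate K L 2 1 ∨ A = Qgate K L 2 1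
    ∨ (∃ i, 1 ≤ i ∧ i ≤ K - 3 ∧ A = Hgate K L i 1 2)
    ∨ (∃ i, 1 ≤ i ∧ i ≤ K - 3 ∧ A = Hgate K L i 2 1)}

/-- The union `𝒲(𝟐, 𝟑)` of all the plateau gates between `𝟐` and `𝟑`. -/
noncomputable def W23 : Set (Config K L) :=
  (⋃ i ∈ Finset.Icc 1 (K - 3), Hgate K L i 1 2) ∪ Qgate K L 1 2 ∪ Pgate K L 1 2 ∪
    (⋃ j ∈ Finset.Icc 2 (L - 3), ⋃ h ∈ Finset.Icc 1 (K - 1), Wgate K L j h 1 2) ∪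
    Pgate K L 2 1 ∪ Qgate K L 2 1 ∪ (⋃ i ∈ Finset.Icc 1 (K - 3), Hgate K L i 2 1)

/-- Nearest-neighbour adjacency on the torus. -/
def Adj (v w : Vtx K L) : Prop :=
  w = (v.1 + 1, v.2) ∨ w = (v.1 - 1, v.2) ∨ w = (v.1, v.2 + 1) ∨ w = (v.1, v.2 - 1)

/-- An `r`-cluster of `σ`: a maximal connected set of vertices all having spin `r`. -/
def IsCluster (σ : Config K L) (r : Spin) (A : Set (Vtx K L)) : Prop :=
  A.Nonempty ∧ (∀ v ∈ A, σ v = r) ∧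
    (∀ v ∈ A, ∀ w ∈ A,
      Relation.ReflTransGen (fun a b => a ∈ A ∧ b ∈ A ∧ Adj K L a b) v w) ∧
    (∀ v ∈ A, ∀ w, Adj K L v w → σ w = r → w ∈ A)

/-- A set of vertices is a rectangle: the product of a set of consecutive columns and a set
of consecutive rows of the torus. -/
def IsRectangle (A : Set (Vtx K L)) : Prop :=
  ∃ (x0 : ZMod K) (y0 : ZMod L) (a b : ℕ), a ≤ K ∧ b ≤ L ∧ A = rectSet K L x0 y0 a b

end Geometry

section LocalMin

variable (K L : ℕ) [NeZero K] [NeZero L]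

/-- The set `M` of strict local minima of `H`. -/
noncomputable def Mset (C : Couplings) : Set (Config K L) :=
  {σ | ∀ σ', SingleFlip K L σ σ' → H K L C σ < H K L C σ'}

/-- A stable plateau: a nonempty set of configurations of constant energy, connected under
single spin flips, such that every configuration outside it reachable by a single spin flip
has strictly larger energy. -/
noncomputable def IsStablePlateau (C : Couplings) (D : Set (Config K L)) : Prop :=
  D.Nonempty ∧ (∃ c, ∀ σ ∈ D, H K L C σ = c) ∧
    (∀ σ ∈ D, ∀ η ∈ D,
      Relation.ReflTransGen (fun a b => a ∈ D ∧ b ∈ D ∧ SingleFlip K L a b) σ η) ∧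
    (∀ σ ∈ D, ∀ σ', SingleFlip K L σ σ' → σ' ∉ D → H K L C σ < H K L C σ')

/-- The union `M̄` of all stable plateaux. -/
noncomputable def Mbar (C : Couplings) : Set (Config K L) :=
  {σ | ∃ D, IsStablePlateau K L C D ∧ σ ∈ D}

end LocalMin


section AuxCount

variable (K L : ℕ) [NeZero K] [NeZero L]

lemma spin_cases : ∀ a : Spin, a = 0 ∨ a = 1 ∨ a = 2 := by decide

/-- The second endpoint of the edge represented by `p`. -/
def endp (p : Vtx K L × Bool) : Vtx K L :=
  if p.2 then (p.1.1 + 1, p.1.2) else (p.1.1, p.1.2 + 1)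

lemma nEdge_def (σ : Config K L) (i j : Spin) :
    nEdge K L σ i j = ((Finset.univ : Finset (Vtx K L × Bool)).filter (fun p =>
      (σ p.1 = i ∧ σ (endp K L p) = j) ∨ (σ p.1 = j ∧ σ (endp K L p) = i))).card := rfl

lemma nEdge_comm (σ : Config K L) (i j : Spin) :
    nEdge K L σ i j = nEdge K L σ j i := by
  rw [nEdge_def, nEdge_def]
  congr 1
  apply Finset.filter_congr
  intro p _
  tauto

lemma partition_sum (σ : Config K L) :
    nEdge K L σ 0 0 + nEdge K L σ 1 1 + nEdge K L σ 2 2 + nEdge K L σ 0 1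
      + nEdge K L σ 0 2 + nEdge K L σ 1 2 = Fintype.card (Vtx K L × Bool) := by
  classical
  rw [Fintype.card, Finset.card_eq_sum_ones]
  simp only [nEdge_def, Finset.card_filter, ← Finset.sum_add_distrib]
  refine Finset.sum_congr rfl fun p _ => ?_
  rcases spin_cases (σ p.1) with h1 | h1 | h1 <;>
    rcases spin_cases (σ (endp K L p)) with h2 | h2 | h2 <;>
      simp [h1, h2]

lemma sum_fst (f : Vtx K L → ℕ) :
    ∑ p : Vtx K L × Bool, f p.1 = 2 * ∑ v : Vtx K L, f v := by
  rw [Fintype.sum_prod_type]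
  simp [two_mul, Finset.sum_add_distrib]

lemma sum_endp (f : Vtx K L → ℕ) :
    ∑ p : Vtx K L × Bool, f (endp K L p) = 2 * ∑ v : Vtx K L, f v := by
  rw [Fintype.sum_prod_type]
  have h1 : ∑ v : Vtx K L, f (endp K L (v, true)) = ∑ v : Vtx K L, f v := by
    have := Equiv.sum_comp ((Equiv.addRight (1 : ZMod K)).prodCongr (Equiv.refl (ZMod L))) f
    simpa [endp, Equiv.prodCongr, Prod.map] using this
  have h2 : ∑ v : Vtx K L, f (endp K L (v, false)) = ∑ v : Vtx K L, f v := by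
    have := Equiv.sum_comp ((Equiv.refl (ZMod K)).prodCongr (Equiv.addRight (1 : ZMod L))) f
    simpa [endp, Equiv.prodCongr, Prod.map] using this
  simp only [Fintype.sum_bool, Finset.sum_add_distrib]
  rw [h1, h2, two_mul]

lemma nVtx_eq_sum (σ : Config K L) :
    nVtx K L σ 0 = ∑ v : Vtx K L, (if σ v = 0 then 1 else 0) := by
  rw [nVtx, Finset.card_filter]

lemma degree_sum (σ : Config K L) :
    2 * nEdge K L σ 0 0 + (nEdge K L σ 0 1 + nEdge K L σ 0 2) = 4 * nVtx K L σ 0 := by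
  classical
  have e1 : 2 * nEdge K L σ 0 0 + (nEdge K L σ 0 1 + nEdge K L σ 0 2)
      = ∑ p : Vtx K L × Bool,
          ((if σ p.1 = 0 then 1 else 0) + (if σ (endp K L p) = 0 then 1 else 0)) := by
    simp only [nEdge_def, Finset.card_filter, Finset.mul_sum, ← Finset.sum_add_distrib]
    refine Finset.sum_congr rfl fun p _ => ?_
    rcases spin_cases (σ p.1) with h1 | h1 | h1 <;>
      rcases spin_cases (σ (endp K L p)) with h2 | h2 | h2 <;>
        simp [h1, h2]
  rw [e1, Finset.sum_add_distrib,
    sum_fst K L (fun v => if σ v = 0 then 1 else 0),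
    sum_endp K L (fun v => if σ v = 0 then 1 else 0), ← nVtx_eq_sum]
  ring

end AuxCount


section AuxIso

variable (K L : ℕ) [NeZero K] [NeZero L]

/-- On a cycle, a non-constant indicator has a descent. -/
lemma exists_descent {M : ℕ} [NeZero M] (f : ZMod M → Prop) [DecidablePred f]
    (a b : ZMod M) (ha : f a) (hb : ¬ f b) : ∃ y, f y ∧ ¬ f (y + 1) := by
  have main : ∀ k : ℕ, ¬ f (a + (k : ZMod M)) → ∃ y, f y ∧ ¬ f (y + 1) := by
    intro k
    induction k with
    | zero => intro h; simp at h; exact absurd ha h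
    | succ k ih =>
      intro hk
      by_cases h : f (a + (k : ZMod M))
      · refine ⟨a + (k : ZMod M), h, ?_⟩
        have : a + ((k : ℕ) + 1 : ZMod M) = a + (k : ZMod M) + 1 := by ring
        rw [← this]
        push_cast at hk ⊢
        exact hk
      · exact ih h
  have hba : b = a + (((b - a).val : ℕ) : ZMod M) := by
    rw [ZMod.natCast_val, ZMod.cast_id]; ring
  exact main (b - a).val (by rwa [← hba])

lemma exists_ascent {M : ℕ} [NeZero M] (f : ZMod M → Prop) [DecidablePred f]
    (a b : ZMod M) (ha : f a) (hb : ¬ f b) : ∃ y, ¬ f y ∧ f (y + 1) := by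
  classical
  obtain ⟨y, hy1, hy2⟩ := exists_descent (fun z => ¬ f z) b a hb (by simpa using ha)
  exact ⟨y, hy1, by_contra fun h => hy2 h⟩

/-- A cycle on which an indicator is non-constant has at least two "jumps". -/
lemma two_le_jumps {M : ℕ} [NeZero M] (f : ZMod M → Prop) [DecidablePred f]
    (a b : ZMod M) (ha : f a) (hb : ¬ f b) :
    2 ≤ (Finset.univ.filter (fun y : ZMod M =>
      (f y ∧ ¬ f (y + 1)) ∨ (¬ f y ∧ f (y + 1)))).card := by
  classical
  obtain ⟨y1, h1, h1'⟩ := exists_descent f a b ha hb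
  obtain ⟨y2, h2, h2'⟩ := exists_ascent f a b ha hb
  rw [Nat.succ_le_iff]
  apply Finset.one_lt_card.mpr
  refine ⟨y1, ?_, y2, ?_, ?_⟩
  · simp only [Finset.mem_filter, Finset.mem_univ, true_and]; tauto
  · simp only [Finset.mem_filter, Finset.mem_univ, true_and]; tauto
  · rintro rfl; exact h2 h1

lemma amgm_key : ∀ c r l : ℤ, 0 ≤ c → 0 ≤ r → l * l + 1 ≤ c * r + l → c + r + 1 ≤ 2 * l → False := by
  intro c r l hc0 hr0 hn h8
  have e1 : 4 * (c * r) ≤ (c + r) ^ 2 := by nlinarith [sq_nonneg (c - r)]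
  have e2 : (c + r) ^ 2 ≤ (2 * l - 1) ^ 2 := by
    nlinarith [mul_nonneg (show (0:ℤ) ≤ 2 * l - 1 - (c + r) by linarith)
      (show (0:ℤ) ≤ 2 * l - 1 + (c + r) by linarith)]
  nlinarith

set_option maxHeartbeats 1600000 in
/-- Key geometric bound: the boundary of the spin-`0` region is bounded below. -/
lemma boundary_lower (σ : Config K L) (ℓ : ℕ) (hl : 1 ≤ ℓ)
    (hnK : nVtx K L σ 0 < K) (hnL : nVtx K L σ 0 < L)
    (hcard : ℓ * ℓ - ℓ + 1 ≤ nVtx K L σ 0) :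
    4 * ℓ ≤ nEdge K L σ 0 1 + nEdge K L σ 0 2 := by
  classical
  set A : Finset (Vtx K L) := Finset.univ.filter (fun v => σ v = 0) with hA
  have hAcard : A.card = nVtx K L σ 0 := rfl
  -- columns and rows meeting A
  set Cs : Finset (ZMod K) := Finset.univ.filter (fun x => ∃ y, σ (x, y) = 0) with hCs
  set Rs : Finset (ZMod L) := Finset.univ.filter (fun y => ∃ x, σ (x, y) = 0) with hRs
  -- A ⊆ Cs ×ˢ Rs
  have hsub : A ⊆ Cs ×ˢ Rs := by
    intro v hv
    simp only [hA, Finset.mem_filter, Finset.mem_univ, true_and] at hv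
    rw [Finset.mem_product]
    constructor
    · simp only [hCs, Finset.mem_filter, Finset.mem_univ, true_and]
      exact ⟨v.2, by rwa [Prod.mk.eta]⟩
    · simp only [hRs, Finset.mem_filter, Finset.mem_univ, true_and]
      exact ⟨v.1, by rwa [Prod.mk.eta]⟩
  have hprod : nVtx K L σ 0 ≤ Cs.card * Rs.card := by
    rw [← hAcard, ← Finset.card_product]
    exact Finset.card_le_card hsub
  -- no full column / row
  have hcol_not_full : ∀ x : ZMod K, ∃ y, ¬ σ (x, y) = 0 := by
    intro x
    by_contra h
    push_neg at h
    have : (Finset.univ : Finset (ZMod L)).card ≤ A.card :=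
      Finset.card_le_card_of_injOn (fun y => (x, y))
        (fun y _ => by simp [hA, h y]) (fun y _ y' _ h => by simpa using h)
    simp only [Finset.card_univ, ZMod.card] at this
    omega
  have hrow_not_full : ∀ y : ZMod L, ∃ x, ¬ σ (x, y) = 0 := by
    intro y
    by_contra h
    push_neg at h
    have : (Finset.univ : Finset (ZMod K)).card ≤ A.card :=
      Finset.card_le_card_of_injOn (fun x => (x, y))
        (fun x _ => by simp [hA, h x]) (fun x _ x' _ h => by simpa using h)
    simp only [Finset.card_univ, ZMod.card] at this
    omega
  -- boundary pairs
  set D : Vtx K L × Bool → Prop := fun p =>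
    (σ p.1 = 0 ∧ ¬ σ (endp K L p) = 0) ∨ (¬ σ p.1 = 0 ∧ σ (endp K L p) = 0) with hD
  have hDcard : (Finset.univ.filter D).card ≤ nEdge K L σ 0 1 + nEdge K L σ 0 2 := by
    rw [nEdge_def, nEdge_def, Finset.card_filter, Finset.card_filter, Finset.card_filter,
      ← Finset.sum_add_distrib]
    refine Finset.sum_le_sum fun p _ => ?_
    rcases spin_cases (σ p.1) with h1 | h1 | h1 <;>
      rcases spin_cases (σ (endp K L p)) with h2 | h2 | h2 <;>
        simp [hD, h1, h2]
  -- vertical boundary pieces, one per column in Cs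
  have hvert : 2 * Cs.card ≤ (Finset.univ.filter (fun p => D p ∧ p.2 = false)).card := by
    have hbi : Cs.biUnion (fun x => (Finset.univ.filter (fun y : ZMod L =>
          (σ (x, y) = 0 ∧ ¬ σ (x, y + 1) = 0) ∨ (¬ σ (x, y) = 0 ∧ σ (x, y + 1) = 0))).image
            (fun y => (((x, y) : Vtx K L), false)))
        ⊆ Finset.univ.filter (fun p => D p ∧ p.2 = false) := by
      intro p hp
      simp only [Finset.mem_biUnion, Finset.mem_image, Finset.mem_filter, Finset.mem_univ,
        true_and] at hp
      obtain ⟨x, _, y, hy, rfl⟩ := hp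
      simp only [Finset.mem_filter, Finset.mem_univ, true_and]
      exact ⟨by simpa [hD, endp] using hy, by trivial⟩
    calc 2 * Cs.card = ∑ _x ∈ Cs, 2 := by rw [Finset.sum_const, smul_eq_mul, mul_comm]
    _ ≤ ∑ x ∈ Cs, ((Finset.univ.filter (fun y : ZMod L =>
          (σ (x, y) = 0 ∧ ¬ σ (x, y + 1) = 0) ∨ (¬ σ (x, y) = 0 ∧ σ (x, y + 1) = 0))).image
            (fun y => (((x, y) : Vtx K L), false))).card := by
        refine Finset.sum_le_sum fun x hx => ?_
        rw [Finset.card_image_of_injective _ (fun y y' h => by simpa using h)]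
        simp only [hCs, Finset.mem_filter, Finset.mem_univ, true_and] at hx
        obtain ⟨y0, hy0⟩ := hx
        obtain ⟨y1, hy1⟩ := hcol_not_full x
        exact two_le_jumps (fun y => σ (x, y) = 0) y0 y1 hy0 hy1
    _ ≤ _ := by
        rw [← Finset.card_biUnion]
        · exact Finset.card_le_card hbi
        · intro x _ x' _ hxx
          simp only [Finset.disjoint_left, Finset.mem_image, Finset.mem_filter]
          rintro p ⟨y, _, rfl⟩ ⟨y', _, h⟩
          have hx : x' = x := congrArg (fun q : Vtx K L × Bool => q.1.1) h
          exact hxx hx.symm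
  -- horizontal boundary pieces, one per row in Rs
  have hhor : 2 * Rs.card ≤ (Finset.univ.filter (fun p => D p ∧ p.2 = true)).card := by
    have hbi : Rs.biUnion (fun y => (Finset.univ.filter (fun x : ZMod K =>
          (σ (x, y) = 0 ∧ ¬ σ (x + 1, y) = 0) ∨ (¬ σ (x, y) = 0 ∧ σ (x + 1, y) = 0))).image
            (fun x => (((x, y) : Vtx K L), true)))
        ⊆ Finset.univ.filter (fun p => D p ∧ p.2 = true) := by
      intro p hp
      simp only [Finset.mem_biUnion, Finset.mem_image, Finset.mem_filter, Finset.mem_univ,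
        true_and] at hp
      obtain ⟨y, _, x, hx, rfl⟩ := hp
      simp only [Finset.mem_filter, Finset.mem_univ, true_and]
      exact ⟨by simpa [hD, endp] using hx, by trivial⟩
    calc 2 * Rs.card = ∑ _y ∈ Rs, 2 := by rw [Finset.sum_const, smul_eq_mul, mul_comm]
    _ ≤ ∑ y ∈ Rs, ((Finset.univ.filter (fun x : ZMod K =>
          (σ (x, y) = 0 ∧ ¬ σ (x + 1, y) = 0) ∨ (¬ σ (x, y) = 0 ∧ σ (x + 1, y) = 0))).image
            (fun x => (((x, y) : Vtx K L), true))).card := by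
        refine Finset.sum_le_sum fun y hy => ?_
        rw [Finset.card_image_of_injective _ (fun x x' h => by simpa using h)]
        simp only [hRs, Finset.mem_filter, Finset.mem_univ, true_and] at hy
        obtain ⟨x0, hx0⟩ := hy
        obtain ⟨x1, hx1⟩ := hrow_not_full y
        exact two_le_jumps (fun x => σ (x, y) = 0) x0 x1 hx0 hx1
    _ ≤ _ := by
        rw [← Finset.card_biUnion]
        · exact Finset.card_le_card hbi
        · intro y _ y' _ hyy
          simp only [Finset.disjoint_left, Finset.mem_image, Finset.mem_filter]
          rintro p ⟨x, _, rfl⟩ ⟨x', _, h⟩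
          have hy2 : y' = y := congrArg (fun q : Vtx K L × Bool => q.1.2) h
          exact hyy hy2.symm
  -- the two pieces are disjoint subsets of the boundary
  have hsplit : (Finset.univ.filter (fun p => D p ∧ p.2 = false)).card
      + (Finset.univ.filter (fun p => D p ∧ p.2 = true)).card
      ≤ (Finset.univ.filter D).card := by
    rw [← Finset.card_union_of_disjoint]
    · apply Finset.card_le_card
      intro p hp
      simp only [Finset.mem_union, Finset.mem_filter, Finset.mem_univ, true_and] at hp ⊢
      tauto
    · simp only [Finset.disjoint_left, Finset.mem_filter]
      rintro p ⟨_, h1⟩ ⟨_, h2⟩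
      simp [h1.2] at h2
  -- arithmetic: Cs.card + Rs.card ≥ 2ℓ
  have hcr : 2 * ℓ ≤ Cs.card + Rs.card := by
    by_contra h
    push_neg at h
    have h7 : ℓ ≤ ℓ * ℓ := Nat.le_mul_of_pos_left ℓ (by omega)
    refine amgm_key Cs.card Rs.card ℓ (by positivity) (by positivity) ?_ ?_
    · exact_mod_cast (show ℓ * ℓ + 1 ≤ Cs.card * Rs.card + ℓ by omega)
    · exact_mod_cast Nat.succ_le_of_lt h
  omega

end AuxIso


section AuxEnergy

variable (K L : ℕ) [NeZero K] [NeZero L]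

lemma nEdge_const (r i j : Spin) :
    nEdge K L (const K L r) i j =
      if r = i ∧ r = j then Fintype.card (Vtx K L × Bool) else 0 := by
  rw [nEdge_def]
  split_ifs with h
  · rw [Finset.filter_true_of_mem fun p _ => Or.inl ⟨h.1, h.2⟩, Finset.card_univ]
  · rw [Finset.filter_false_of_mem, Finset.card_empty]
    intro p _
    simp only [const]
    tauto

lemma H_const1 (C : Couplings) :
    H K L C (const K L 1) = -(C.J22 * (Fintype.card (Vtx K L × Bool) : ℝ)) := by
  rw [H]
  simp only [nEdge_const]
  rw [if_neg (by decide), if_pos (by decide), if_neg (by decide), if_neg (by decide),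
    if_neg (by decide), if_neg (by decide)]
  push_cast
  ring

lemma deltaH (C : Couplings) (h1 : C.J22 = C.J33) (h2 : C.J12 = C.J13) (σ : Config K L) :
    H K L C σ - H K L C (const K L 1)
      = -(C.γ1 * (nEdge K L σ 0 0 : ℝ)) + C.γ12 * (nEdge K L σ 0 1 : ℝ)
        + C.γ12 * (nEdge K L σ 0 2 : ℝ) + C.γ23 * (nEdge K L σ 1 2 : ℝ) := by
  have hT : ((nEdge K L σ 0 0 : ℝ)) + (nEdge K L σ 1 1 : ℝ) + (nEdge K L σ 2 2 : ℝ)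
      + (nEdge K L σ 0 1 : ℝ) + (nEdge K L σ 0 2 : ℝ) + (nEdge K L σ 1 2 : ℝ)
      = (Fintype.card (Vtx K L × Bool) : ℝ) := by
    exact_mod_cast congrArg (Nat.cast : ℕ → ℝ) (partition_sum K L σ)
  rw [H, H_const1]
  simp only [Couplings.γ1, Couplings.γ12, Couplings.γ23]
  linear_combination (-C.J22) * hT + ((nEdge K L σ 2 2 : ℝ)) * h1 - ((nEdge K L σ 0 2 : ℝ)) * h2

lemma Gammastar_eq (C : Couplings) (hγ1 : 0 < C.γ1) (hγ12 : 0 < C.γ12) :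
    Γstar C = 4 * (C.γ12 + C.γ1 / 2) * (lstar C : ℝ)
      - 2 * C.γ1 * ((lstar C : ℝ) ^ 2 - (lstar C : ℝ) + 1) := by
  have hq : (C.γ12 + C.γ1 / 2) / C.γ1 = (2 * C.γ12 + C.γ1) / (2 * C.γ1) := by
    field_simp
  have hpos : (0:ℝ) ≤ (C.γ12 + C.γ1 / 2) / C.γ1 :=
    div_nonneg (by linarith) (le_of_lt hγ1)
  have hcast : ((lstar C : ℕ) : ℝ) = ((⌈(C.γ12 + C.γ1 / 2) / C.γ1⌉ : ℤ) : ℝ) := by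
    rw [lstar, ← hq, natCast_ceil_eq_intCast_ceil hpos]
  rw [Γstar, fh, ← hcast]

lemma lstar_pos (C : Couplings) (hγ1 : 0 < C.γ1) (hγ12 : 0 < C.γ12) : 1 ≤ lstar C := by
  rw [lstar]
  exact Nat.one_le_iff_ne_zero.mpr (Nat.pos_iff_ne_zero.mp
    (Nat.ceil_pos.mpr (div_pos (by linarith) (by linarith))))

lemma energy_lower (C : Couplings) (hadm : Admissible K L C) (σ : Config K L)
    (hn : nVtx K L σ 0 = lstar C * lstar C - lstar C + 1) :
    H K L C (const K L 1) + Γstar C ≤ H K L C σ := by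
  have hγ1 : 0 < C.γ1 := sub_pos.mpr hadm.h1122
  have hγ12 : 0 < C.γ12 := add_pos hadm.pos12 hadm.pos22
  have hγ23 : 0 < C.γ23 := add_pos hadm.pos23 hadm.pos22
  have hl : 1 ≤ lstar C := lstar_pos C hγ1 hγ12
  have hK2 : 2 * lstar C ^ 2 ≤ K := hadm.hK
  have hsq : lstar C ^ 2 = lstar C * lstar C := sq (lstar C)
  have hle : lstar C ≤ lstar C * lstar C := Nat.le_mul_of_pos_left _ (by omega)
  have hnK : nVtx K L σ 0 < K := by omega
  have hnL : nVtx K L σ 0 < L := lt_of_lt_of_le hnK hadm.hKL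
  have hbd : 4 * lstar C ≤ nEdge K L σ 0 1 + nEdge K L σ 0 2 :=
    boundary_lower K L σ (lstar C) hl hnK hnL (le_of_eq hn.symm)
  have hdeg := degree_sum K L σ
  have hdeg' : 2 * nEdge K L σ 0 0 + (nEdge K L σ 0 1 + nEdge K L σ 0 2) + 4 * lstar C
      = 4 * (lstar C * lstar C) + 4 := by omega
  have hdegR : 2 * (nEdge K L σ 0 0 : ℝ) + ((nEdge K L σ 0 1 : ℝ) + (nEdge K L σ 0 2 : ℝ))
      + 4 * (lstar C : ℝ) = 4 * ((lstar C : ℝ) * (lstar C : ℝ)) + 4 := by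
    exact_mod_cast congrArg (Nat.cast : ℕ → ℝ) hdeg'
  have hbdR : 4 * (lstar C : ℝ) ≤ (nEdge K L σ 0 1 : ℝ) + (nEdge K L σ 0 2 : ℝ) := by
    exact_mod_cast hbd
  have hΔ := deltaH K L C hadm.h2233 hadm.h1213 σ
  have h23 : (0:ℝ) ≤ C.γ23 * (nEdge K L σ 1 2 : ℝ) :=
    mul_nonneg (le_of_lt hγ23) (Nat.cast_nonneg _)
  have hmul : (C.γ1 / 2 + C.γ12) * (4 * (lstar C : ℝ))
      ≤ (C.γ1 / 2 + C.γ12) * ((nEdge K L σ 0 1 : ℝ) + (nEdge K L σ 0 2 : ℝ)) :=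
    mul_le_mul_of_nonneg_left hbdR (by linarith)
  have hGs := Gammastar_eq C hγ1 hγ12
  have hE0eq : C.γ1 * (nEdge K L σ 0 0 : ℝ)
      = C.γ1 / 2 * (4 * ((lstar C : ℝ) * (lstar C : ℝ)) + 4 - 4 * (lstar C : ℝ)
          - ((nEdge K L σ 0 1 : ℝ) + (nEdge K L σ 0 2 : ℝ))) := by
    have hE0 : (nEdge K L σ 0 0 : ℝ) = (4 * ((lstar C : ℝ) * (lstar C : ℝ)) + 4
        - 4 * (lstar C : ℝ) - ((nEdge K L σ 0 1 : ℝ) + (nEdge K L σ 0 2 : ℝ))) / 2 := by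
      linarith
    rw [hE0]
    ring
  rw [hGs]
  nlinarith [hΔ, h23, hmul, hE0eq]

end AuxEnergy

section AuxSwap

variable (K L : ℕ) [NeZero K] [NeZero L]

lemma swap_iff : ∀ a b : Spin, (Equiv.swap (1:Spin) 2) a = b ↔ a = (Equiv.swap (1:Spin) 2) b := by
  decide

lemma nEdge_swap (σ : Config K L) (i j : Spin) :
    nEdge K L ((Equiv.swap (1:Spin) 2) ∘ σ) i j
      = nEdge K L σ ((Equiv.swap (1:Spin) 2) i) ((Equiv.swap (1:Spin) 2) j) := by
  rw [nEdge_def, nEdge_def]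
  congr 1
  apply Finset.filter_congr
  intro p _
  simp only [Function.comp_apply, swap_iff]

lemma H_swap (C : Couplings) (h1 : C.J22 = C.J33) (h2 : C.J12 = C.J13) (σ : Config K L) :
    H K L C ((Equiv.swap (1:Spin) 2) ∘ σ) = H K L C σ := by
  rw [H, H]
  rw [nEdge_swap, nEdge_swap, nEdge_swap, nEdge_swap, nEdge_swap, nEdge_swap]
  simp only [show (Equiv.swap (1:Spin) 2) 0 = 0 from by decide,
    show (Equiv.swap (1:Spin) 2) 1 = 2 from by decide,
    show (Equiv.swap (1:Spin) 2) 2 = 1 from by decide]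
  rw [nEdge_comm K L σ 2 1]
  linear_combination ((nEdge K L σ 1 1 : ℝ) - (nEdge K L σ 2 2 : ℝ)) * h1
    + ((nEdge K L σ 0 2 : ℝ) - (nEdge K L σ 0 1 : ℝ)) * h2

lemma phi_set_swap_subset (C : Couplings) (h1 : C.J22 = C.J33) (h2 : C.J12 = C.J13)
    (σ σ' : Config K L) :
    {x : ℝ | ∃ ω : Path K L, ω.FromTo σ σ' ∧ ω.height C = x}
      ⊆ {x : ℝ | ∃ ω : Path K L,
          ω.FromTo ((Equiv.swap (1:Spin) 2) ∘ σ) ((Equiv.swap (1:Spin) 2) ∘ σ')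
          ∧ ω.height C = x} := by
  rintro x ⟨ω, ⟨h0, hlen⟩, rfl⟩
  refine ⟨⟨ω.len, fun n => (Equiv.swap (1:Spin) 2) ∘ ω.toFun n, ?_⟩, ⟨?_, ?_⟩, ?_⟩
  · intro n hn
    obtain ⟨v, hv, hw⟩ := ω.step n hn
    exact ⟨v, fun hc => hv ((Equiv.swap (1:Spin) 2).injective hc),
      fun w hwv => congrArg _ (hw w hwv)⟩
  · show (Equiv.swap (1:Spin) 2) ∘ ω.toFun 0 = _
    rw [h0]
  · show (Equiv.swap (1:Spin) 2) ∘ ω.toFun ω.len = _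
    rw [hlen]
  · rw [Path.height, Path.height]
    exact Finset.sup'_congr _ rfl (fun n _ => H_swap K L C h1 h2 (ω.toFun n))

lemma swap_swap_comp (σ : Config K L) :
    (Equiv.swap (1:Spin) 2) ∘ ((Equiv.swap (1:Spin) 2) ∘ σ) = σ := by
  funext v
  simp [Equiv.swap_apply_self]

lemma phi_swap (C : Couplings) (h1 : C.J22 = C.J33) (h2 : C.J12 = C.J13)
    (σ σ' : Config K L) :
    Phi K L C ((Equiv.swap (1:Spin) 2) ∘ σ) ((Equiv.swap (1:Spin) 2) ∘ σ')
      = Phi K L C σ σ' := by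
  rw [Phi, Phi]
  congr 1
  apply Set.Subset.antisymm
  · have := phi_set_swap_subset K L C h1 h2 ((Equiv.swap (1:Spin) 2) ∘ σ)
      ((Equiv.swap (1:Spin) 2) ∘ σ')
    rwa [swap_swap_comp, swap_swap_comp] at this
  · exact phi_set_swap_subset K L C h1 h2 σ σ'

end AuxSwap

section AuxPath

variable (K L : ℕ) [NeZero K] [NeZero L]

lemma nat_ivt (g : ℕ → ℕ) (m : ℕ) (hstep : ∀ k, k < m → g (k + 1) ≤ g k + 1) (t : ℕ)
    (h0 : g 0 ≤ t) (hm : t ≤ g m) : ∃ k, k ≤ m ∧ g k = t := by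
  induction m with
  | zero => exact ⟨0, le_refl 0, le_antisymm h0 hm⟩
  | succ m ih =>
    by_cases h : t ≤ g m
    · obtain ⟨k, hk, hgk⟩ := ih (fun k hk => hstep k (by omega)) h
      exact ⟨k, by omega, hgk⟩
    · have := hstep m (by omega)
      exact ⟨m + 1, le_refl _, by omega⟩

lemma nVtx_flip_le (σ σ' : Config K L) (h : SingleFlip K L σ σ') :
    nVtx K L σ' 0 ≤ nVtx K L σ 0 + 1 := by
  obtain ⟨v, _, hw⟩ := h
  rw [nVtx, nVtx]
  have hsub : Finset.univ.filter (fun w => σ' w = 0)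
      ⊆ insert v (Finset.univ.filter (fun w => σ w = 0)) := by
    intro w hwmem
    simp only [Finset.mem_filter, Finset.mem_univ, true_and] at hwmem
    by_cases hwv : w = v
    · rw [hwv]
      exact Finset.mem_insert_self v _
    · apply Finset.mem_insert_of_mem
      simp only [Finset.mem_filter, Finset.mem_univ, true_and]
      rw [hw w hwv]
      exact hwmem
  calc (Finset.univ.filter (fun w => σ' w = 0)).card
      ≤ (insert v (Finset.univ.filter (fun w => σ w = 0))).card := Finset.card_le_card hsub
    _ ≤ (Finset.univ.filter (fun w => σ w = 0)).card + 1 := Finset.card_insert_le _ _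

lemma nVtx_const1 : nVtx K L (const K L 1) 0 = 0 := by
  rw [nVtx, Finset.card_eq_zero, Finset.filter_eq_empty_iff]
  intro v _
  simp [const]

lemma nVtx_const0 : nVtx K L (const K L 0) 0 = K * L := by
  rw [nVtx]
  have he : Finset.filter (fun v => const K L 0 v = 0) (Finset.univ : Finset (Vtx K L))
      = Finset.univ := Finset.filter_true_of_mem (fun v _ => rfl)
  rw [he, Finset.card_univ]
  simp [Fintype.card_prod, ZMod.card]

lemma exists_path (σ σ' : Config K L) (hd : ∀ v, σ v ≠ σ' v) :
    ∃ ω : Path K L, ω.FromTo σ σ' := by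
  classical
  let N := Fintype.card (Vtx K L)
  let e : Vtx K L ≃ Fin N := Fintype.equivFin _
  refine ⟨⟨N, fun n v => if (e v : ℕ) < n then σ' v else σ v, ?_⟩, ?_, ?_⟩
  · intro n hn
    refine ⟨e.symm ⟨n, hn⟩, ?_, ?_⟩
    · simp only [Equiv.apply_symm_apply]
      rw [if_neg (by omega), if_pos (by omega)]
      exact hd _
    · intro w hwv
      have hne : (e w : ℕ) ≠ n := by
        intro hh
        apply hwv
        have : e w = (⟨n, hn⟩ : Fin N) := Fin.ext hh
        rw [← Equiv.symm_apply_apply e w, this]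
      simp only
      rcases Nat.lt_or_ge (e w : ℕ) n with hlt | hge
      · rw [if_pos hlt, if_pos (by omega)]
      · rw [if_neg (by omega), if_neg (by omega)]
  · funext v
    simp
  · funext v
    simp [(e v).isLt]

end AuxPath

theorem communication_height_lower_bound_to_stable (K L : ℕ) [NeZero K] [NeZero L] (C : Couplings)
    (hadm : Admissible K L C) :
    Gamma K L C (const K L 1) (const K L 0) = Gamma K L C (const K L 2) (const K L 0) ∧
    Γstar C ≤ Gamma K L C (const K L 1) (const K L 0) := by
  have h1 := hadm.h2233
  have h2 := hadm.h1213
  have hγ1 : 0 < C.γ1 := sub_pos.mpr hadm.h1122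
  have hγ12 : 0 < C.γ12 := add_pos hadm.pos12 hadm.pos22
  have hs1 : (⇑(Equiv.swap (1:Spin) 2)) ∘ (const K L 1) = const K L 2 := by
    funext v
    show Equiv.swap (1:Spin) 2 1 = 2
    decide
  have hs0 : (⇑(Equiv.swap (1:Spin) 2)) ∘ (const K L 0) = const K L 0 := by
    funext v
    show Equiv.swap (1:Spin) 2 0 = 0
    decide
  have hPhi : Phi K L C (const K L 2) (const K L 0) = Phi K L C (const K L 1) (const K L 0) := by
    have := phi_swap K L C h1 h2 (const K L 1) (const K L 0)
    rwa [hs1, hs0] at this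
  have hH12 : H K L C (const K L 2) = H K L C (const K L 1) := by
    have := H_swap K L C h1 h2 (const K L 1)
    rwa [hs1] at this
  constructor
  · rw [Gamma, Gamma, hPhi, hH12]
  · rw [Gamma]
    have hmain : H K L C (const K L 1) + Γstar C ≤ Phi K L C (const K L 1) (const K L 0) := by
      rw [Phi]
      apply le_csInf
      · obtain ⟨ω, hω⟩ := exists_path K L (const K L 1) (const K L 0) (fun v => by show (1:Spin) ≠ 0; decide)
        exact ⟨ω.height C, ω, hω, rfl⟩
      · rintro x ⟨ω, ⟨hw0, hwlen⟩, rfl⟩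
        have hl : 1 ≤ lstar C := lstar_pos C hγ1 hγ12
        have hsq : lstar C ^ 2 = lstar C * lstar C := sq (lstar C)
        have hle : lstar C ≤ lstar C * lstar C := Nat.le_mul_of_pos_left _ (by omega)
        have hK2 : 2 * lstar C ^ 2 ≤ K := hadm.hK
        have hKL : K ≤ K * L := Nat.le_mul_of_pos_right K (Nat.pos_of_ne_zero (NeZero.ne L))
        obtain ⟨k, hk, hgk⟩ := nat_ivt (fun k => nVtx K L (ω.toFun k) 0) ω.len
          (fun k hk => nVtx_flip_le K L _ _ (ω.step k hk))
          (lstar C * lstar C - lstar C + 1)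
          (by show nVtx K L (ω.toFun 0) 0 ≤ _
              rw [hw0, nVtx_const1]
              omega)
          (by show _ ≤ nVtx K L (ω.toFun ω.len) 0
              rw [hwlen, nVtx_const0]
              omega)
        have hlow := energy_lower K L C hadm (ω.toFun k) hgk
        have hsup : H K L C (ω.toFun k) ≤ ω.height C := by
          rw [Path.height]
          exact Finset.le_sup' (fun n => H K L C (ω.toFun n)) (Finset.mem_range.mpr (by omega))
        linarith
    linarith

end GenPotts
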